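/- For every prime p and every k ≥ 0, the p-adic absolute value of the Bernoulli number B_k satisfies |B_k|_p ≤ p. -/

import Mathlib

open Finset

lemma sum_range_mul_split {M : Type*} [AddCommMonoid M] (f : ℕ → M) (a b : ℕ) :
    ∑ i ∈ range (a * b), f i = ∑ x ∈ range a, ∑ y ∈ range b, f (x * b + y) := by
  induction a with
  | zero => simp
  | succ n ih =>
      rw [Nat.succ_mul, Finset.sum_range_add, ih, Finset.sum_range_succ]

lemma dvd_sum_pow (p : ℕ) (m : ℕ) :
    ∀ k, p ^ m ∣ ∑ i ∈ range (p ^ (m + 1)), i ^ k := by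
  induction m with
  | zero => simp
  | succ m ih =>
      intro k
      have hsplit : ∑ i ∈ range (p ^ (m + 2)), i ^ k
          = ∑ b ∈ range p, ∑ a ∈ range (p ^ (m + 1)), (b * p ^ (m + 1) + a) ^ k := by
        rw [← sum_range_mul_split (fun i => i ^ k) p (p ^ (m + 1)), ← pow_succ']
      have hterm : ∀ b ∈ range p, ∑ a ∈ range (p ^ (m+1)), (b * p ^ (m + 1) + a) ^ k
            = ∑ a ∈ range (p ^ (m+1)), ∑ t ∈ range (k + 1),
                (b * p ^ (m+1)) ^ t * a ^ (k - t) * k.choose t :=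
        fun b _ => Finset.sum_congr rfl fun a _ => (Commute.all _ _).add_pow k
      rw [hsplit, Finset.sum_congr rfl hterm, Finset.sum_congr rfl
        (fun b _ => Finset.sum_comm), Finset.sum_comm]
      refine Finset.dvd_sum fun t _ => ?_
      rcases Nat.eq_zero_or_pos t with ht | ht
      · subst ht
        simp only [pow_zero, one_mul, Nat.choose_zero_right, mul_one, Nat.sub_zero]
        rw [Finset.sum_const, card_range, smul_eq_mul]
        have h2 := mul_dvd_mul_left p (ih k)
        rwa [← pow_succ'] at h2
      · refine Finset.dvd_sum fun b _ => Finset.dvd_sum fun a _ => ?_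
        refine Dvd.dvd.mul_right (Dvd.dvd.mul_right ?_ _) _
        calc p^(m+1) ∣ (p^(m+1))^t := dvd_pow_self _ ht.ne'
          _ ∣ (b * p^(m+1))^t := pow_dvd_pow_of_dvd (dvd_mul_left _ _) t

lemma padic_norm_sum_le {p : ℕ} [Fact p.Prime] {ι : Type*} (s : Finset ι)
    (f : ι → ℚ_[p]) {C : ℝ} (hC : 0 ≤ C) (h : ∀ i ∈ s, ‖f i‖ ≤ C) :
    ‖∑ i ∈ s, f i‖ ≤ C := by
  induction s using Finset.cons_induction with
  | empty => simpa
  | cons a s ha ih =>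
      rw [Finset.sum_cons]
      exact (Padic.nonarchimedean _ _).trans
        (max_le (h a (Finset.mem_cons_self _ _))
          (ih fun i hi => h i (Finset.mem_cons.mpr (Or.inr hi))))

lemma inv_le_norm_natCast {p : ℕ} [hp : Fact p.Prime] {n : ℕ} (hn : n ≠ 0) :
    ((n : ℝ))⁻¹ ≤ ‖(n : ℚ_[p])‖ := by
  have h1 : ((n : ℚ_[p])) = (((n : ℚ)) : ℚ_[p]) := by norm_cast
  rw [h1, Padic.eq_padicNorm,
    padicNorm.eq_zpow_of_nonzero (by exact_mod_cast hn),
    padicValRat.of_nat]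
  have hd : p ^ padicValNat p n ≤ n := Nat.le_of_dvd (Nat.pos_of_ne_zero hn)
    (pow_padicValNat_dvd)
  have hp1 : (1:ℝ) < p := by exact_mod_cast hp.out.one_lt
  push_cast
  rw [zpow_neg, show padicValRat p (n:ℚ) = (padicValNat p n : ℤ) from padicValRat.of_nat,
    zpow_natCast]
  exact inv_anti₀ (by positivity) (by exact_mod_cast hd)

/-- von Staudt–Clausen bound: for every prime `p` and `k ≥ 0`,
`|B_k|_p ≤ p`, where `B_k` is the `k`-th Bernoulli number (EGF `x/(e^x−1)`). -/
theorem stmt10 (p : ℕ) [Fact p.Prime] (k : ℕ) :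
    ‖((bernoulli k : ℚ) : ℚ_[p])‖ ≤ (p : ℝ) := by
  induction k using Nat.strong_induction_on with
  | _ k ih =>
  have hp2 : 2 ≤ p := (Fact.out : p.Prime).two_le
  have hp1 : (1:ℝ) < p := by exact_mod_cast (Fact.out : p.Prime).one_lt
  have hp0 : (0:ℝ) < p := by linarith
  set m : ℕ := k + 2 with hm
  -- Faulhaber
  have hF := sum_range_pow (p ^ m) k
  rw [Finset.sum_range_succ] at hF
  have hk1 : ((k:ℚ) + 1) ≠ 0 := by positivity
  have hlast : (bernoulli k) * ((k+1).choose k) * ((p^m : ℕ) : ℚ) ^ (k + 1 - k) / (↑k + 1)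
      = bernoulli k * ((p^m : ℕ) : ℚ) := by
    rw [Nat.choose_succ_self_right, Nat.add_sub_cancel_left, pow_one]
    push_cast
    field_simp
  rw [hlast] at hF
  -- key equation in ℚ
  have hkey : (bernoulli k) * ((p^m : ℕ) : ℚ)
      = (∑ i ∈ range (p ^ m), (i : ℚ) ^ k)
        - ∑ j ∈ range k, bernoulli j * ((k+1).choose j) * ((p^m : ℕ) : ℚ) ^ (k + 1 - j) / (↑k + 1) := by
    rw [hF]; ring
  -- cast to ℚ_p and take norms
  have hcast := congrArg (fun q : ℚ => (q : ℚ_[p])) hkey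
  simp only [Rat.cast_mul, Rat.cast_sub, Rat.cast_sum, Rat.cast_div, Rat.cast_pow,
    Rat.cast_natCast, Rat.cast_add, Rat.cast_one] at hcast
  have hnormN : ‖((p^m : ℕ) : ℚ_[p])‖ = (p : ℝ) ^ (-(m:ℤ)) := by
    rw [Nat.cast_pow]
    exact Padic.norm_p_pow m
  -- norm of the power-sum part
  have hS : ‖((∑ i ∈ range (p ^ m), (i:ℚ) ^ k : ℚ) : ℚ_[p])‖ ≤ (p:ℝ) ^ ((1:ℤ) - m) := by
    have hdvd : (p:ℤ) ^ (k+1) ∣ ((∑ i ∈ range (p ^ m), i ^ k : ℕ) : ℤ) := by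
      exact_mod_cast dvd_sum_pow p (k+1) k
    have := (Padic.norm_int_le_pow_iff_dvd (p := p)
      ((∑ i ∈ range (p ^ m), i ^ k : ℕ) : ℤ) (k+1)).mpr hdvd
    have hEq : (((∑ i ∈ range (p ^ m), i ^ k : ℕ) : ℤ) : ℚ_[p])
        = ((∑ i ∈ range (p ^ m), (i:ℚ) ^ k : ℚ) : ℚ_[p]) := by push_cast; ring
    rw [hEq] at this
    have hexp : ((1:ℤ) - m) = -((k+1 : ℕ) : ℤ) := by
      rw [hm]; push_cast; ring
    rw [hexp]
    exact this
  -- norm of each term of the correction sum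
  have hT : ‖((∑ j ∈ range k, bernoulli j * ((k+1).choose j) * ((p^m : ℕ) : ℚ) ^ (k + 1 - j) / (↑k + 1) : ℚ) : ℚ_[p])‖
      ≤ (p:ℝ) ^ ((1:ℤ) - m) := by
    rw [Rat.cast_sum]
    refine padic_norm_sum_le _ _ (by positivity) fun j hj => ?_
    rw [Finset.mem_range] at hj
    simp only [Rat.cast_div, Rat.cast_mul, Rat.cast_pow, Rat.cast_natCast, Rat.cast_add,
      Rat.cast_one]
    rw [norm_div, norm_mul, norm_mul, norm_pow]
    have h1 : ‖((bernoulli j : ℚ) : ℚ_[p])‖ ≤ (p:ℝ) := ih j (by omega)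
    have h2 : ‖(((k+1).choose j : ℕ) : ℚ_[p])‖ ≤ 1 := by
      have := Padic.norm_int_le_one (p := p) (((k+1).choose j : ℕ) : ℤ)
      simpa using this
    have h3 : ‖((p^m : ℕ) : ℚ_[p])‖ ^ (k + 1 - j) ≤ ((p:ℝ) ^ (-(m:ℤ))) ^ 2 := by
      rw [hnormN]
      have hle : (0:ℝ) ≤ (p:ℝ) ^ (-(m:ℤ)) := by positivity
      have hle1 : (p:ℝ) ^ (-(m:ℤ)) ≤ 1 := by
        rw [zpow_neg]
        exact inv_le_one_of_one_le₀ (one_le_zpow₀ hp1.le (by positivity))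
      exact pow_le_pow_of_le_one hle hle1 (by omega)
    have h4 : ‖((k:ℚ_[p]) + 1)‖⁻¹ ≤ ((k:ℝ) + 1) := by
      have h5 : (((k+1:ℕ)) : ℝ)⁻¹ ≤ ‖(((k+1 : ℕ)) : ℚ_[p])‖ :=
        inv_le_norm_natCast (p := p) (n := k+1) (Nat.succ_ne_zero k)
      have h6 : (((k+1:ℕ)) : ℚ_[p]) = (k:ℚ_[p]) + 1 := by push_cast; ring
      rw [h6] at h5
      rw [show (((k+1:ℕ)) : ℝ) = (k:ℝ) + 1 by push_cast; ring] at h5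
      have h7 : (0:ℝ) < ‖(k:ℚ_[p]) + 1‖ := by
        rw [← h6]
        refine norm_pos_iff.mpr ?_
        exact_mod_cast Nat.cast_ne_zero (R := ℚ_[p]).mpr (Nat.succ_ne_zero k)
      calc ‖(k:ℚ_[p]) + 1‖⁻¹ ≤ (((k:ℝ)+1)⁻¹)⁻¹ := inv_anti₀ (by positivity) h5
        _ = (k:ℝ) + 1 := inv_inv _
    have hcomb : ‖((bernoulli j : ℚ) : ℚ_[p])‖ * ‖(((k+1).choose j : ℕ) : ℚ_[p])‖
          * ‖((p^m : ℕ) : ℚ_[p])‖ ^ (k + 1 - j) / ‖((k:ℚ_[p]) + 1)‖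
        ≤ (p:ℝ) * 1 * ((p:ℝ) ^ (-(m:ℤ))) ^ 2 * ((k:ℝ) + 1) := by
      rw [div_eq_mul_inv]
      gcongr <;> positivity
    refine le_trans hcomb ?_
    -- p * (p^{-m})^2 * (k+1) ≤ p^{1-m}
    have hkmN : (k + 1) ≤ p ^ m := by
      calc k + 1 ≤ 2 ^ (k+1) := (Nat.lt_two_pow_self (n := k+1)).le
        _ ≤ 2 ^ m := Nat.pow_le_pow_right (by norm_num) (by omega)
        _ ≤ p ^ m := Nat.pow_le_pow_left hp2 m
    have hkm : ((k:ℝ) + 1) ≤ (p:ℝ) ^ (m:ℕ) := by exact_mod_cast hkmN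
    calc (p:ℝ) * 1 * ((p:ℝ) ^ (-(m:ℤ))) ^ 2 * ((k:ℝ) + 1)
        ≤ (p:ℝ) * 1 * ((p:ℝ) ^ (-(m:ℤ))) ^ 2 * ((p:ℝ) ^ (m:ℕ)) := by gcongr
      _ = (p:ℝ) ^ ((1:ℤ) - m) := by
          have h9 : ((p:ℝ) ^ (-(m:ℤ)))^2 = (p:ℝ) ^ ((-(m:ℤ))*2) := by
            rw [← zpow_natCast ((p:ℝ) ^ (-(m:ℤ))) 2, ← zpow_mul]; norm_num
          rw [mul_one, h9, ← zpow_natCast (p:ℝ) m, mul_assoc,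
            ← zpow_add₀ (ne_of_gt hp0), ← zpow_one_add₀ (ne_of_gt hp0)]
          congr 1
          omega
  -- put it together
  have hnorm := congrArg (fun x : ℚ_[p] => ‖x‖) hcast
  simp only [norm_mul] at hnorm
  have hmax : ‖((bernoulli k : ℚ) : ℚ_[p])‖ * ‖((p^m : ℕ) : ℚ_[p])‖ ≤ (p:ℝ) ^ ((1:ℤ) - m) := by
    rw [hnorm]
    rw [sub_eq_add_neg]
    refine (Padic.nonarchimedean _ _).trans (max_le ?_ ?_)
    · exact_mod_cast hS
    · rw [norm_neg]; exact_mod_cast hT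
  rw [hnormN] at hmax
  have hpos : (0:ℝ) < (p:ℝ) ^ (-(m:ℤ)) := by positivity
  calc ‖((bernoulli k : ℚ) : ℚ_[p])‖ ≤ (p:ℝ) ^ ((1:ℤ) - m) / (p:ℝ) ^ (-(m:ℤ)) := by
        rw [le_div_iff₀ hpos]; exact hmax
    _ = (p:ℝ) := by
        rw [← zpow_sub₀ (ne_of_gt hp0)]
        norm_num
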